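/- Let (R,m) be a Noetherian local ring of dimension d and I, J m-primary ideals with mixed multiplicities e_i(I|J). Then for all positive integers r, s: e(I^r J^s) = Σ_{i=0}^{d} C(d,i)·e_i(I|J)·r^{d−i}·s^i. -/

import Mathlib

/-- The composition length of an `R`-module `M`, as a real number
(the Krull dimension of its submodule lattice; junk value `0` if infinite). -/
noncomputable def rlen (R : Type*) [Ring R] (M : Type*) [AddCommGroup M] [Module R M] : ℝ :=
  ((WithBot.unbotD 0 (Order.krullDim (Submodule R M))).toNat : ℝ)

open Filter in
/-- The Hilbert–Samuel multiplicity of an ideal `I` in a `d`-dimensional ring: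
`d! · lim_n ℓ(R/Iⁿ)/n^d`. -/
noncomputable def hsMult {R : Type*} [CommRing R] (d : ℕ) (I : Ideal R) : ℝ :=
  (d.factorial : ℝ) * limUnder atTop (fun n : ℕ => rlen R (R ⧸ I ^ n) / (n : ℝ) ^ d)

open Filter MvPolynomial in
lemma aux_tendsto (d : ℕ) (Q : MvPolynomial (Fin 2) ℝ) (hQ : Q.totalDegree < d)
    (r s : ℕ) :
    Tendsto (fun n : ℕ => MvPolynomial.eval ![((r * n : ℕ) : ℝ), ((s * n : ℕ) : ℝ)] Q / (n : ℝ) ^ d)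
      atTop (nhds 0) := by
  have h : ∀ n : ℕ, MvPolynomial.eval ![((r * n : ℕ) : ℝ), ((s * n : ℕ) : ℝ)] Q / (n : ℝ) ^ d
      = ∑ m ∈ Q.support,
          (Q.coeff m * (r : ℝ) ^ (m 0) * (s : ℝ) ^ (m 1)) * ((n : ℝ) ^ (m 0 + m 1) / (n : ℝ) ^ d) := by
    intro n
    rw [MvPolynomial.eval_eq', Finset.sum_div]
    refine Finset.sum_congr rfl fun m hm => ?_
    have h2 : (∏ i, (![((r * n : ℕ) : ℝ), ((s * n : ℕ) : ℝ)]) i ^ m i)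
        = ((r * n : ℕ) : ℝ) ^ (m 0) * ((s * n : ℕ) : ℝ) ^ (m 1) := by
      simp [Fin.prod_univ_two]
    rw [h2]
    push_cast
    rw [mul_pow, mul_pow, pow_add]
    ring
  have hlim : Tendsto (fun n : ℕ => ∑ m ∈ Q.support,
      (Q.coeff m * (r : ℝ) ^ (m 0) * (s : ℝ) ^ (m 1)) * ((n : ℝ) ^ (m 0 + m 1) / (n : ℝ) ^ d))
      atTop (nhds (∑ m ∈ Q.support, (Q.coeff m * (r : ℝ) ^ (m 0) * (s : ℝ) ^ (m 1)) * 0)) := by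
    refine tendsto_finset_sum _ fun m hm => ?_
    refine Tendsto.const_mul _ ?_
    have hlt : m 0 + m 1 < d := by
      have h1 : (m.sum fun _ e => e) ≤ Q.totalDegree := MvPolynomial.le_totalDegree hm
      have h2 : (m.sum fun _ e => e) = m 0 + m 1 := by
        rw [Finsupp.sum_fintype _ _ (fun _ => rfl), Fin.sum_univ_two]
      omega
    exact (tendsto_pow_div_pow_atTop_zero hlt).comp tendsto_natCast_atTop_atTop
  simp only [mul_zero, Finset.sum_const_zero] at hlim
  exact hlim.congr fun n => (h n).symm

/-- with mixed multiplicities `eᵢ` given by the Bhattacharya polynomial,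
`e(I^r J^s) = Σ_{i=0}^d C(d,i) eᵢ r^{d-i} s^i` for all positive integers `r, s`. -/
theorem stmt_6 (R : Type*) [CommRing R] [IsNoetherianRing R] [IsLocalRing R]
    (d : ℕ) (hdim : ringKrullDim R = d)
    (I J : Ideal R)
    (hI : I.radical = IsLocalRing.maximalIdeal R)
    (hJ : J.radical = IsLocalRing.maximalIdeal R)
    (e : ℕ → ℝ) (Q : MvPolynomial (Fin 2) ℝ) (hQ : Q.totalDegree < d)
    (hP : ∃ N : ℕ, ∀ r ≥ N, ∀ s ≥ N,
      rlen R (R ⧸ (I ^ r * J ^ s)) =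
        (1 / (d.factorial : ℝ)) *
          ∑ i ∈ Finset.range (d + 1),
            (d.choose i : ℝ) * e i * (r : ℝ) ^ (d - i) * (s : ℝ) ^ i +
        MvPolynomial.eval ![(r : ℝ), (s : ℝ)] Q) :
    ∀ r s : ℕ, 0 < r → 0 < s →
      hsMult d (I ^ r * J ^ s) =
        ∑ i ∈ Finset.range (d + 1),
          (d.choose i : ℝ) * e i * (r : ℝ) ^ (d - i) * (s : ℝ) ^ i := by
  intro r s hr hs
  obtain ⟨N, hN⟩ := hP
  classical
  set L := ∑ i ∈ Finset.range (d + 1),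
      (d.choose i : ℝ) * e i * (r : ℝ) ^ (d - i) * (s : ℝ) ^ i with hL
  have hfac : (d.factorial : ℝ) ≠ 0 := Nat.cast_ne_zero.mpr d.factorial_ne_zero
  have key : Filter.Tendsto
      (fun n : ℕ => rlen R (R ⧸ (I ^ r * J ^ s) ^ n) / (n : ℝ) ^ d)
      Filter.atTop (nhds (L / d.factorial)) := by
    have h0 := aux_tendsto d Q hQ r s
    have heq : ∀ᶠ n in Filter.atTop,
        L / d.factorial + MvPolynomial.eval ![((r * n : ℕ) : ℝ), ((s * n : ℕ) : ℝ)] Q / (n : ℝ) ^ d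
          = rlen R (R ⧸ (I ^ r * J ^ s) ^ n) / (n : ℝ) ^ d := by
      filter_upwards [Filter.eventually_ge_atTop (N + 1)] with n hn
      have hn1 : 1 ≤ n := le_trans (Nat.le_add_left 1 N) hn
      have hrn : r * n ≥ N := le_trans (le_trans (Nat.le_succ N) hn) (Nat.le_mul_of_pos_left n hr)
      have hsn : s * n ≥ N := le_trans (le_trans (Nat.le_succ N) hn) (Nat.le_mul_of_pos_left n hs)
      have hideal : (I ^ r * J ^ s) ^ n = I ^ (r * n) * J ^ (s * n) := by
        rw [mul_pow, pow_mul, pow_mul]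
      rw [hideal, hN (r * n) hrn (s * n) hsn]
      have hnd : ((n : ℝ)) ^ d ≠ 0 := pow_ne_zero _ (Nat.cast_ne_zero.mpr (by omega))
      have hsum : (∑ i ∈ Finset.range (d + 1),
          (d.choose i : ℝ) * e i * ((r * n : ℕ) : ℝ) ^ (d - i) * ((s * n : ℕ) : ℝ) ^ i)
          = (n : ℝ) ^ d * L := by
        rw [hL, Finset.mul_sum]
        refine Finset.sum_congr rfl fun i hi => ?_
        have hid : i ≤ d := Finset.mem_range_succ_iff.mp hi
        have hnn : (n : ℝ) ^ (d - i) * (n : ℝ) ^ i = (n : ℝ) ^ d := by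
          rw [← pow_add, Nat.sub_add_cancel hid]
        push_cast
        rw [mul_pow, mul_pow, ← hnn]
        ring
      rw [hsum]
      field_simp
    have := (Filter.Tendsto.const_add (L / (d.factorial : ℝ)) h0).congr' heq
    simpa using this
  rw [hsMult]
  rw [key.limUnder_eq, mul_div_cancel₀ _ hfac]
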